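/- Let X be a strongly zero-dimensional metrizable topological space that is σ-compact and satisfies 3 ≤ card(X) ≤ 𝔠. Then the set R(X) of all rigid metrics in Met(X) is comeager in (Met(X), D_X). -/

import Mathlib

/-- A metric on `X` (as a distance function) that induces the topology of `X`;
an element of the space of metrics `Met(X)`. -/
structure MetricOn (X : Type*) [TopologicalSpace X] where
  toFun : X → X → ℝ
  symm : ∀ x y, toFun x y = toFun y x
  refl : ∀ x, toFun x x = 0
  eq_of : ∀ x y, toFun x y = 0 → x = y
  triangle : ∀ x y z, toFun x z ≤ toFun x y + toFun y z
  isOpen_iff : ∀ s : Set X, IsOpen s ↔ ∀ x ∈ s, ∃ ε > 0, ∀ y, toFun x y < ε → y ∈ s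

/-- The supremum distance `D_X(d,e) = sup_{x,y} |d(x,y) - e(x,y)| ∈ [0,∞]` on `Met(X)`. -/
noncomputable def supDist {X : Type*} [TopologicalSpace X] (d e : MetricOn X) : ENNReal :=
  ⨆ p : X × X, ENNReal.ofReal |d.toFun p.1 p.2 - e.toFun p.1 p.2|

/-- The topology on `Met(X)` generated by the open balls of the supremum distance. -/
noncomputable instance metricOnTopology (X : Type*) [TopologicalSpace X] :
    TopologicalSpace (MetricOn X) :=
  TopologicalSpace.generateFrom
    {B | ∃ (d : MetricOn X) (ε : ℝ), 0 < ε ∧ B = {e | supDist d e < ENNReal.ofReal ε}}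

/-- A metric is rigid if every bijective self-isometry is the identity map. -/
def RigidM {X : Type*} [TopologicalSpace X] (d : MetricOn X) : Prop :=
  ∀ f : X → X, Function.Bijective f →
    (∀ x y, d.toFun (f x) (f y) = d.toFun x y) → f = id

/-- A space is strongly zero-dimensional if any two disjoint closed sets are separated
by a clopen set. -/
def StronglyZeroDim (X : Type*) [TopologicalSpace X] : Prop :=
  ∀ A B : Set X, IsClosed A → IsClosed B → A ∩ B = ∅ →
    ∃ V : Set X, IsClopen V ∧ A ⊆ V ∧ V ∩ B = ∅


namespace Stmt14Aux


variable {X : Type} [TopologicalSpace X]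

lemma mo_nonneg (d : MetricOn X) (x y : X) : 0 ≤ d.toFun x y := by
  have h := d.triangle x y x
  have h2 := d.symm y x
  have h3 := d.refl x
  nlinarith

lemma mo_pos (d : MetricOn X) {x y : X} (h : x ≠ y) : 0 < d.toFun x y := by
  rcases lt_or_eq_of_le (mo_nonneg d x y) with h1 | h1
  · exact h1
  · exact absurd (d.eq_of x y h1.symm) h

lemma mo_isOpen_ball (d : MetricOn X) (x : X) (r : ℝ) :
    IsOpen {y | d.toFun x y < r} := by
  rw [d.isOpen_iff]
  intro z hz
  refine ⟨r - d.toFun x z, by simpa using hz, fun y hy => ?_⟩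
  have := d.triangle x z y
  simp only [Set.mem_setOf_eq] at *
  linarith

lemma mo_continuous₂ (d : MetricOn X) :
    Continuous (fun p : X × X => d.toFun p.1 p.2) := by
  rw [continuous_iff_continuousAt]
  rintro ⟨x₀, y₀⟩
  rw [ContinuousAt, Metric.tendsto_nhds]
  intro ε hε
  have hmem : {p : X × X | d.toFun x₀ p.1 < ε/2 ∧ d.toFun y₀ p.2 < ε/2} ∈ nhds (x₀, y₀) := by
    have h1 : {y | d.toFun x₀ y < ε/2} ×ˢ {y | d.toFun y₀ y < ε/2} ∈ nhds (x₀, y₀) := by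
      refine prod_mem_nhds ((mo_isOpen_ball d x₀ (ε/2)).mem_nhds ?_)
        ((mo_isOpen_ball d y₀ (ε/2)).mem_nhds ?_) <;> simp [d.refl, hε]
    exact h1
  filter_upwards [hmem] with p hp
  obtain ⟨h1, h2⟩ := hp
  rw [Real.dist_eq, abs_sub_lt_iff]
  have t1 := d.triangle p.1 x₀ p.2
  have t5 := d.triangle x₀ p.1 y₀
  have t2 := d.triangle x₀ y₀ p.2
  have t3 := d.triangle x₀ p.1 p.2
  have t4 := d.triangle p.1 p.2 y₀
  have s1 := d.symm x₀ p.1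
  have s2 := d.symm y₀ p.2
  have s3 := d.symm p.2 y₀
  constructor <;> nlinarith

lemma supDist_le {d e : MetricOn X} {r : ℝ}
    (h : ∀ x y, |d.toFun x y - e.toFun x y| ≤ r) : supDist d e ≤ ENNReal.ofReal r :=
  iSup_le fun p => ENNReal.ofReal_le_ofReal (h p.1 p.2)

lemma pair_lt {d e : MetricOn X} {r : ℝ} (h : supDist d e < ENNReal.ofReal r) (x y : X) :
    |d.toFun x y - e.toFun x y| < r := by
  have h1 : ENNReal.ofReal |d.toFun x y - e.toFun x y| < ENNReal.ofReal r :=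
    lt_of_le_of_lt (le_iSup (fun p : X × X => ENNReal.ofReal |d.toFun p.1 p.2 - e.toFun p.1 p.2|) (x, y)) h
  exact (ENNReal.ofReal_lt_ofReal_iff_of_nonneg (abs_nonneg _)).mp h1

lemma supDist_self (d : MetricOn X) : supDist d d = 0 := by
  simp [supDist]

lemma supDist_triangle (d e f : MetricOn X) :
    supDist d f ≤ supDist d e + supDist e f := by
  refine iSup_le fun p => ?_
  have h1 : |d.toFun p.1 p.2 - f.toFun p.1 p.2| ≤
      |d.toFun p.1 p.2 - e.toFun p.1 p.2| + |e.toFun p.1 p.2 - f.toFun p.1 p.2| := abs_sub_le _ _ _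
  calc ENNReal.ofReal |d.toFun p.1 p.2 - f.toFun p.1 p.2|
      ≤ ENNReal.ofReal (|d.toFun p.1 p.2 - e.toFun p.1 p.2| + |e.toFun p.1 p.2 - f.toFun p.1 p.2|) :=
        ENNReal.ofReal_le_ofReal h1
    _ ≤ ENNReal.ofReal |d.toFun p.1 p.2 - e.toFun p.1 p.2| + ENNReal.ofReal |e.toFun p.1 p.2 - f.toFun p.1 p.2| :=
        ENNReal.ofReal_add_le
    _ ≤ supDist d e + supDist e f := add_le_add
        (le_iSup (fun p : X × X => ENNReal.ofReal |d.toFun p.1 p.2 - e.toFun p.1 p.2|) p)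
        (le_iSup (fun p : X × X => ENNReal.ofReal |e.toFun p.1 p.2 - f.toFun p.1 p.2|) p)

/-- Balls around points inside an open set. -/
lemma exists_ball_subset {U : Set (MetricOn X)} (hU : IsOpen U) {d : MetricOn X} (hd : d ∈ U) :
    ∃ ε > 0, {e | supDist d e < ENNReal.ofReal ε} ⊆ U := by
  have hgen : TopologicalSpace.GenerateOpen
      {B | ∃ (d : MetricOn X) (ε : ℝ), 0 < ε ∧ B = {e | supDist d e < ENNReal.ofReal ε}} U := hU
  clear hU
  revert hd
  induction hgen with
  | basic B hB =>
    obtain ⟨d₀, ε₀, hε₀, rfl⟩ := hB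
    intro hd
    simp only [Set.mem_setOf_eq] at hd
    set s := supDist d₀ d with hs
    have hstop : s ≠ ⊤ := ne_top_of_lt (lt_of_lt_of_le hd le_top)
    have hρ : s.toReal < ε₀ := by
      rw [← ENNReal.ofReal_toReal hstop] at hd
      exact (ENNReal.ofReal_lt_ofReal_iff hε₀).mp hd
    refine ⟨ε₀ - s.toReal, by linarith, fun e he => ?_⟩
    simp only [Set.mem_setOf_eq] at he ⊢
    have : supDist d₀ e ≤ s + supDist d e := supDist_triangle d₀ d e
    calc supDist d₀ e ≤ s + supDist d e := this
      _ < s + ENNReal.ofReal (ε₀ - s.toReal) := by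
          exact ENNReal.add_lt_add_left hstop he
      _ = ENNReal.ofReal (s.toReal) + ENNReal.ofReal (ε₀ - s.toReal) := by
          rw [ENNReal.ofReal_toReal hstop]
      _ = ENNReal.ofReal ε₀ := by
          rw [← ENNReal.ofReal_add ENNReal.toReal_nonneg (by linarith)]
          congr 1; ring
  | univ => exact fun _ => ⟨1, one_pos, fun _ _ => trivial⟩
  | inter U V hU hV ihU ihV =>
    intro hd
    obtain ⟨ε₁, hε₁, h₁⟩ := ihU hd.1
    obtain ⟨ε₂, hε₂, h₂⟩ := ihV hd.2
    refine ⟨min ε₁ ε₂, lt_min hε₁ hε₂, fun e he => ?_⟩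
    simp only [Set.mem_setOf_eq] at he
    constructor
    · exact h₁ (lt_of_lt_of_le he (ENNReal.ofReal_le_ofReal (min_le_left _ _)))
    · exact h₂ (lt_of_lt_of_le he (ENNReal.ofReal_le_ofReal (min_le_right _ _)))
  | sUnion S hS ih =>
    intro hd
    obtain ⟨U, hUS, hdU⟩ := hd
    obtain ⟨ε, hε, h⟩ := ih U hUS hdU
    exact ⟨ε, hε, fun e he => ⟨U, hUS, h he⟩⟩

lemma isOpen_of_balls {U : Set (MetricOn X)}
    (h : ∀ d ∈ U, ∃ ε > 0, {e | supDist d e < ENNReal.ofReal ε} ⊆ U) : IsOpen U := by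
  have hU : U = ⋃₀ {B | (∃ (d : MetricOn X) (ε : ℝ), 0 < ε ∧
      B = {e | supDist d e < ENNReal.ofReal ε}) ∧ B ⊆ U} := by
    ext e
    constructor
    · intro he
      obtain ⟨ε, hε, hsub⟩ := h e he
      refine ⟨{f | supDist e f < ENNReal.ofReal ε}, ⟨⟨e, ε, hε, rfl⟩, hsub⟩, ?_⟩
      simp only [Set.mem_setOf_eq, supDist_self]
      exact ENNReal.ofReal_pos.mpr hε
    · rintro ⟨B, ⟨_, hBsub⟩, heB⟩
      exact hBsub heB
  rw [hU]
  exact isOpen_sUnion fun B hB => TopologicalSpace.GenerateOpen.basic B hB.1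



/-- The exponent sequence: factorials, giving rapidly growing gaps. -/
def bexp (t : ℕ) : ℕ := (t+1).factorial

lemma bexp_lt (t : ℕ) : t < bexp t :=
  lt_of_lt_of_le (Nat.lt_succ_self t) (Nat.self_le_factorial (t+1))

lemma bexp_mono : Monotone bexp := by
  intro a b hab
  exact Nat.factorial_le (by omega)

lemma bexp_gap (t : ℕ) : bexp t + (t+1) ≤ bexp (t+1) := by
  have h1 : bexp (t+1) = (t+2) * bexp t := by
    simp [bexp, Nat.factorial_succ]
  have h2 : t + 1 ≤ bexp t := Nat.self_le_factorial (t+1)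
  nlinarith [Nat.one_le_iff_ne_zero.mpr (Nat.factorial_ne_zero (t+1))]

lemma bexp_add_le (m j : ℕ) : bexp m + j ≤ bexp (m + j) := by
  induction j with
  | zero => simp
  | succ k ih =>
    have h := bexp_gap (m + k)
    rw [show m + (k+1) = (m+k)+1 from rfl]
    omega

lemma half_pow_pos (k : ℕ) : (0:ℝ) < (2:ℝ)⁻¹ ^ k := by positivity

lemma half_pow_le {j k : ℕ} (h : j ≤ k) : (2:ℝ)⁻¹ ^ k ≤ (2:ℝ)⁻¹ ^ j :=
  pow_le_pow_of_le_one (by norm_num) (by norm_num) h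

lemma half_pow_mul {m n : ℕ} (h : m ≤ n) : (2:ℝ)⁻¹ ^ m * 2 ^ n = 2 ^ (n - m) := by
  have h2 : (2:ℝ) ^ n = 2 ^ (n - m) * 2 ^ m := by rw [← pow_add]; congr 1; omega
  rw [h2, inv_pow]
  have : (2:ℝ) ^ m ≠ 0 := by positivity
  field_simp

lemma half_pow_mul' {m n : ℕ} (h : m ≤ n) : (2:ℝ) ^ m * (2:ℝ)⁻¹ ^ n = (2:ℝ)⁻¹ ^ (n - m) := by
  have h2 : ((2:ℝ)⁻¹) ^ n = (2:ℝ)⁻¹ ^ (n - m) * (2:ℝ)⁻¹ ^ m := by rw [← pow_add]; congr 1; omega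
  rw [h2, inv_pow]
  have : (2:ℝ) ^ m ≠ 0 := by positivity
  field_simp
  rw [← mul_pow]; norm_num

lemma summable_of_half_bound (g : ℕ → ℝ) (C : ℝ) (m : ℕ)
    (hg : ∀ j, |g j| ≤ C * (2:ℝ)⁻¹ ^ (m + j)) : Summable g := by
  refine Summable.of_norm_bounded (g := fun j => C * (2:ℝ)⁻¹ ^ (m + j)) ?_ (fun j => by simpa [Real.norm_eq_abs] using hg j)
  have : Summable (fun j : ℕ => (C * (2:ℝ)⁻¹ ^ m) * (2:ℝ)⁻¹ ^ j) :=
    (summable_geometric_of_lt_one (by norm_num) (by norm_num)).mul_left _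
  refine this.congr fun j => ?_
  rw [pow_add]; ring

lemma tsum_tail_bound (g : ℕ → ℝ) (C : ℝ) (m : ℕ)
    (hg : ∀ j, |g j| ≤ C * (2:ℝ)⁻¹ ^ (m + j)) :
    |∑' j, g j| ≤ C * (2:ℝ)⁻¹ ^ m * 2 := by
  have hsg : Summable g := summable_of_half_bound g C m hg
  have hsb : Summable (fun j : ℕ => C * (2:ℝ)⁻¹ ^ (m + j)) := by
    have : Summable (fun j : ℕ => (C * (2:ℝ)⁻¹ ^ m) * (2:ℝ)⁻¹ ^ j) :=
      (summable_geometric_of_lt_one (by norm_num) (by norm_num)).mul_left _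
    refine this.congr fun j => ?_
    rw [pow_add]; ring
  have h1 : |∑' j, g j| ≤ ∑' j, |g j| := by
    simpa [Real.norm_eq_abs] using
      norm_tsum_le_tsum_norm (f := g) (by simpa [Real.norm_eq_abs] using hsg.abs)
  have h2 : ∑' j, |g j| ≤ ∑' j, C * (2:ℝ)⁻¹ ^ (m + j) :=
    Summable.tsum_le_tsum hg hsg.abs hsb
  have h3 : ∑' j, C * (2:ℝ)⁻¹ ^ (m + j) = C * (2:ℝ)⁻¹ ^ m * 2 := by
    have : (fun j : ℕ => C * (2:ℝ)⁻¹ ^ (m + j)) = fun j : ℕ => (C * (2:ℝ)⁻¹ ^ m) * (2:ℝ)⁻¹ ^ j := by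
      funext j; rw [pow_add]; ring
    rw [this, tsum_mul_left, tsum_geometric_of_lt_one (by norm_num) (by norm_num)]
    norm_num
  linarith

/-- Key irrationality lemma: a series `∑ c_t 2^{-(t+1)!}` with bounded integer coefficients,
infinitely many of them nonzero, is irrational. -/
lemma keyIrrat (c : ℕ → ℤ) (N : ℕ) (hN : ∀ t, (c t).natAbs ≤ N)
    (hinf : ∀ M, ∃ t, M ≤ t ∧ c t ≠ 0) (r : ℚ)
    (hsum : ∑' t, (c t : ℝ) * (2:ℝ)⁻¹ ^ (bexp t) = (r : ℝ)) : False := by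
  set f : ℕ → ℝ := fun t => (c t : ℝ) * (2:ℝ)⁻¹ ^ (bexp t) with hf
  have habs : ∀ t, |(c t : ℝ)| ≤ (N:ℝ) := by
    intro t
    have h1 : |c t| ≤ (N:ℤ) := by rw [Int.abs_eq_natAbs]; exact_mod_cast hN t
    exact_mod_cast h1
  have hfabs : ∀ t, |f t| = |(c t : ℝ)| * (2:ℝ)⁻¹ ^ (bexp t) := by
    intro t
    rw [hf, abs_mul, abs_of_pos (half_pow_pos _)]
  have hfb : ∀ t, |f t| ≤ (N:ℝ) * (2:ℝ)⁻¹ ^ t := by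
    intro t
    rw [hfabs t]
    exact mul_le_mul (habs t) (half_pow_le (le_of_lt (bexp_lt t))) (le_of_lt (half_pow_pos _))
      (Nat.cast_nonneg N)
  have hfbexp : ∀ (m : ℕ), ∀ j, |f (j + m)| ≤ (N:ℝ) * (2:ℝ)⁻¹ ^ (bexp m + j) := by
    intro m j
    calc |f (j + m)| ≤ (N:ℝ) * (2:ℝ)⁻¹ ^ (bexp (j + m)) := by
          rw [hfabs]
          exact mul_le_mul_of_nonneg_right (habs _) (le_of_lt (half_pow_pos _))
      _ ≤ (N:ℝ) * (2:ℝ)⁻¹ ^ (bexp m + j) := by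
          refine mul_le_mul_of_nonneg_left (half_pow_le ?_) (Nat.cast_nonneg N)
          have := bexp_add_le m j
          rw [Nat.add_comm j m]
          omega
  have hsf : Summable f := by
    refine summable_of_half_bound f (N:ℝ) 0 (fun j => ?_)
    simpa using hfb j
  have hN1 : 1 ≤ N := by
    by_contra hN0
    have hN0' : N = 0 := by omega
    obtain ⟨t, -, hct⟩ := hinf 0
    have := hN t
    rw [hN0'] at this
    exact hct (Int.natAbs_eq_zero.mp (by omega))
  set s : ℕ := r.den with hsdef
  have hs : 0 < s := r.pos
  set T₀ : ℕ := 4 * s * N with hT₀def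
  obtain ⟨t₁, ht₁, hct₁⟩ := hinf (T₀ + 1)
  have hex : ∃ t, T₀ + 1 ≤ t ∧ c t ≠ 0 := ⟨t₁, ht₁, hct₁⟩
  classical
  set t₀ := Nat.find hex with ht₀def
  obtain ⟨ht₀ge, hct₀⟩ := Nat.find_spec hex
  set T := t₀ - 1 with hTdef
  have hTt₀ : T + 1 = t₀ := by omega
  have hT₀T : T₀ ≤ T := by omega
  -- split the sum
  have hsplit := Summable.sum_add_tsum_nat_add (f := f) (T+1) hsf
  set tail : ℝ := ∑' i, f (i + (T+1)) with htaildef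
  set P : ℝ := ∑ i ∈ Finset.range (T+1), f i with hPdef
  have htail : tail = (r:ℝ) - P := by rw [← hsum]; linarith [hsplit]
  set z : ℤ := 2 ^ (bexp T) * r.num - (s:ℤ) * ∑ i ∈ Finset.range (T+1), c i * 2 ^ (bexp T - bexp i)
    with hzdef
  have hs0 : (s:ℝ) ≠ 0 := by positivity
  have h1 : (s:ℝ) * (r:ℝ) = (r.num:ℝ) := by
    have hq : r * (r.den:ℚ) = (r.num:ℚ) := Rat.mul_den_eq_num r
    rw [hsdef, mul_comm]
    exact_mod_cast congrArg (fun t : ℚ => (t:ℝ)) hq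
  have h1' : (s:ℝ) * 2 ^ (bexp T) * (r:ℝ) = 2 ^ (bexp T) * (r.num:ℝ) := by
    rw [← h1]; ring
  have h2 : (s:ℝ) * 2 ^ (bexp T) * P
      = (s:ℝ) * ∑ i ∈ Finset.range (T+1), (c i : ℝ) * 2 ^ (bexp T - bexp i) := by
    rw [hPdef, Finset.mul_sum, Finset.mul_sum]
    refine Finset.sum_congr rfl fun i hi => ?_
    have hiT : bexp i ≤ bexp T := bexp_mono (Nat.lt_succ_iff.mp (Finset.mem_range.mp hi))
    rw [show (s:ℝ) * 2 ^ (bexp T) * f i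
        = (s:ℝ) * ((c i : ℝ) * ((2:ℝ)⁻¹ ^ (bexp i) * 2 ^ (bexp T))) by rw [hf]; ring,
      half_pow_mul hiT]
  have hcastz : (z:ℝ) = (s:ℝ) * 2 ^ (bexp T) * tail := by
    have hzc : (z:ℝ) = 2 ^ (bexp T) * (r.num:ℝ)
        - (s:ℝ) * ∑ i ∈ Finset.range (T+1), (c i : ℝ) * 2 ^ (bexp T - bexp i) := by
      rw [hzdef]; push_cast; ring
    rw [hzc, htail]
    rw [mul_sub]
    rw [h1', h2]
  -- upper bound on |z|
  have htailbound : |tail| ≤ (N:ℝ) * (2:ℝ)⁻¹ ^ (bexp (T+1)) * 2 :=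
    tsum_tail_bound _ _ _ (hfbexp (T+1))
  have hpowTnat : (2:ℕ) * s * N < 2 ^ (T+1) := by
    calc 2 * s * N ≤ 4 * s * N := by nlinarith
      _ ≤ T := hT₀T
      _ < 2 ^ T := T.lt_two_pow_self
      _ ≤ 2 ^ (T+1) := Nat.pow_le_pow_right (by norm_num) (by omega)
  have hZbound : |(z:ℝ)| < 1 := by
    rw [hcastz, abs_mul, abs_mul]
    rw [abs_of_nonneg (Nat.cast_nonneg s : (0:ℝ) ≤ s), abs_of_pos (by positivity : (0:ℝ) < 2 ^ (bexp T))]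
    have hgap : bexp T + (T+1) ≤ bexp (T+1) := bexp_gap T
    have hb1 : (2:ℝ) ^ (bexp T) * (2:ℝ)⁻¹ ^ (bexp (T+1)) = (2:ℝ)⁻¹ ^ (bexp (T+1) - bexp T) :=
      half_pow_mul' (by omega)
    have hb2 : (2:ℝ)⁻¹ ^ (bexp (T+1) - bexp T) ≤ (2:ℝ)⁻¹ ^ (T+1) := half_pow_le (by omega)
    calc (s:ℝ) * (2:ℝ) ^ (bexp T) * |tail|
        ≤ (s:ℝ) * (2:ℝ) ^ (bexp T) * ((N:ℝ) * (2:ℝ)⁻¹ ^ (bexp (T+1)) * 2) := by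
          refine mul_le_mul_of_nonneg_left htailbound (by positivity)
      _ = (2 * s * N : ℝ) * ((2:ℝ) ^ (bexp T) * (2:ℝ)⁻¹ ^ (bexp (T+1))) := by ring
      _ = (2 * s * N : ℝ) * (2:ℝ)⁻¹ ^ (bexp (T+1) - bexp T) := by rw [hb1]
      _ ≤ (2 * s * N : ℝ) * (2:ℝ)⁻¹ ^ (T+1) := by
          refine mul_le_mul_of_nonneg_left hb2 (by positivity)
      _ < 1 := by
          rw [inv_pow]
          rw [mul_inv_lt_iff₀ (by positivity)]
          have : ((2 * s * N : ℕ) : ℝ) < ((2 ^ (T+1) : ℕ) : ℝ) := by exact_mod_cast hpowTnat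
          push_cast at this ⊢
          linarith
  -- z is nonzero
  have hone_le : (1:ℝ) ≤ |(c t₀ : ℝ)| := by
    have : (1:ℤ) ≤ |c t₀| := Int.one_le_abs hct₀
    exact_mod_cast this
  have htail_shift : tail = f t₀ + ∑' i, f (i + (t₀ + 1)) := by
    have hsum2 : Summable fun i => f (i + t₀) := (summable_nat_add_iff t₀).mpr hsf
    have e1 : tail = ∑' i, f (i + t₀) := by rw [htaildef, hTt₀]
    rw [e1, Summable.tsum_eq_zero_add hsum2]
    congr 1
    · simp
    · refine tsum_congr fun i => ?_
      congr 1
      omega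
  have htail2bound : |∑' i, f (i + (t₀ + 1))| ≤ (N:ℝ) * (2:ℝ)⁻¹ ^ (bexp (t₀+1)) * 2 :=
    tsum_tail_bound _ _ _ (hfbexp (t₀+1))
  have hsmall : (N:ℝ) * (2:ℝ)⁻¹ ^ (bexp (t₀+1)) * 2 < (2:ℝ)⁻¹ ^ (bexp t₀) := by
    have hgap : bexp t₀ + (t₀+1) ≤ bexp (t₀+1) := bexp_gap t₀
    have hb2 : (2:ℝ)⁻¹ ^ (bexp (t₀+1)) ≤ (2:ℝ)⁻¹ ^ (bexp t₀ + (t₀+1)) := half_pow_le hgap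
    have hsplitpow : (2:ℝ)⁻¹ ^ (bexp t₀ + (t₀+1)) = (2:ℝ)⁻¹ ^ (bexp t₀) * (2:ℝ)⁻¹ ^ (t₀+1) :=
      pow_add _ _ _
    have hNlt : (2:ℝ) * N * (2:ℝ)⁻¹ ^ (t₀+1) < 1 := by
      rw [inv_pow, mul_inv_lt_iff₀ (by positivity)]
      have h2N : (2 * N : ℕ) < 2 ^ (t₀ + 1) := by
        calc 2 * N ≤ 2 * s * N := by nlinarith
          _ < 2 ^ (T+1) := hpowTnat
          _ ≤ 2 ^ (t₀+1) := Nat.pow_le_pow_right (by norm_num) (by omega)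
      have : ((2 * N : ℕ) : ℝ) < ((2 ^ (t₀+1) : ℕ) : ℝ) := by exact_mod_cast h2N
      push_cast at this ⊢
      linarith
    calc (N:ℝ) * (2:ℝ)⁻¹ ^ (bexp (t₀+1)) * 2
        ≤ (N:ℝ) * ((2:ℝ)⁻¹ ^ (bexp t₀) * (2:ℝ)⁻¹ ^ (t₀+1)) * 2 := by
          rw [← hsplitpow]
          refine mul_le_mul_of_nonneg_right (mul_le_mul_of_nonneg_left hb2 (Nat.cast_nonneg N)) (by norm_num)
      _ = (2:ℝ)⁻¹ ^ (bexp t₀) * ((2:ℝ) * N * (2:ℝ)⁻¹ ^ (t₀+1)) := by ring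
      _ < (2:ℝ)⁻¹ ^ (bexp t₀) * 1 := by
          exact mul_lt_mul_of_pos_left hNlt (half_pow_pos _)
      _ = (2:ℝ)⁻¹ ^ (bexp t₀) := mul_one _
  have htail_ne : tail ≠ 0 := by
    intro h0
    rw [htail_shift] at h0
    have h3 : |f t₀| = |∑' i, f (i + (t₀ + 1))| := by
      have : f t₀ = -(∑' i, f (i + (t₀ + 1))) := by linarith
      rw [this, abs_neg]
    have h4 : (2:ℝ)⁻¹ ^ (bexp t₀) ≤ |f t₀| := by
      rw [hfabs]
      nlinarith [half_pow_pos (bexp t₀), hone_le]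
    linarith [lt_of_le_of_lt htail2bound hsmall, h3.symm ▸ h4]
  have hZne : (z:ℝ) ≠ 0 := by
    rw [hcastz]
    refine mul_ne_zero (mul_ne_zero hs0 (by positivity)) htail_ne
  have hz0 : z ≠ 0 := fun h => hZne (by rw [h]; simp)
  have : (1:ℝ) ≤ |(z:ℝ)| := by
    have h5 : (1:ℤ) ≤ |z| := Int.one_le_abs hz0
    exact_mod_cast h5
  linarith




/-- Countable clopen partition with small pieces, encoded as a function to ℕ. -/
lemma exists_part [TopologicalSpace.MetrizableSpace X] [SigmaCompactSpace X] [Nonempty X]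
    (hX : StronglyZeroDim X) (d : MetricOn X) {δ : ℝ} (hδ : 0 < δ) :
    ∃ p : X → ℕ, (∀ x, IsOpen {y | p y = p x}) ∧ (∀ x y, p x = p y → d.toFun x y ≤ δ) := by
  classical
  -- basic clopen neighborhoods inside balls
  have hV : ∀ x : X, ∃ V : Set X, IsClopen V ∧ x ∈ V ∧ V ⊆ {y | d.toFun x y < δ/2} := by
    intro x
    have hball : IsOpen {y | d.toFun x y < δ/2} := mo_isOpen_ball d x (δ/2)
    have hdisj : ({x} : Set X) ∩ {y | d.toFun x y < δ/2}ᶜ = ∅ := by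
      apply Set.eq_empty_iff_forall_notMem.mpr
      rintro z ⟨hz1, hz2⟩
      rw [Set.mem_singleton_iff] at hz1
      subst hz1
      exact hz2 (by simp [d.refl, hδ, half_pos hδ])
    obtain ⟨V, hVclopen, hxV, hVB⟩ := hX {x} {y | d.toFun x y < δ/2}ᶜ isClosed_singleton
      (isClosed_compl_iff.mpr hball) hdisj
    refine ⟨V, hVclopen, hxV (Set.mem_singleton x), fun y hy => ?_⟩
    by_contra hyB
    exact Set.eq_empty_iff_forall_notMem.mp hVB y ⟨hy, hyB⟩
  choose V hVclopen hxV hVB using hV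
  -- countably many of them cover X
  have hcover : ∀ n : ℕ, ∃ t : Finset X, compactCovering X n ⊆ ⋃ x ∈ t, V x := by
    intro n
    refine (isCompact_compactCovering X n).elim_finite_subcover V (fun x => (hVclopen x).isOpen) ?_
    intro y _
    exact Set.mem_iUnion.mpr ⟨y, hxV y⟩
  choose t ht using hcover
  set A : Set X := ⋃ n, (t n : Set X) with hA
  have hAcount : A.Countable := Set.countable_iUnion fun n => (t n).countable_toSet
  have hAcov : ∀ y : X, ∃ x ∈ A, y ∈ V x := by
    intro y
    have : y ∈ ⋃ n, compactCovering X n := by rw [iUnion_compactCovering]; trivial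
    obtain ⟨n, hn⟩ := Set.mem_iUnion.mp this
    have := ht n hn
    obtain ⟨x, hx⟩ := Set.mem_iUnion.mp this
    obtain ⟨hxt, hyV⟩ := Set.mem_iUnion.mp hx
    exact ⟨x, Set.mem_iUnion.mpr ⟨n, hxt⟩, hyV⟩
  have hAne : A.Nonempty := by
    obtain ⟨y⟩ := (inferInstance : Nonempty X)
    obtain ⟨x, hxA, -⟩ := hAcov y
    exact ⟨x, hxA⟩
  obtain ⟨u, hu⟩ := hAcount.exists_eq_range hAne
  have hucov : ∀ y : X, ∃ n : ℕ, y ∈ V (u n) := by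
    intro y
    obtain ⟨x, hxA, hyV⟩ := hAcov y
    rw [hu] at hxA
    obtain ⟨n, rfl⟩ := hxA
    exact ⟨n, hyV⟩
  set p : X → ℕ := fun y => Nat.find (hucov y) with hp
  have hpspec : ∀ y, y ∈ V (u (p y)) := fun y => Nat.find_spec (hucov y)
  have hpmin : ∀ y k, k < p y → y ∉ V (u k) := fun y k hk => Nat.find_min (hucov y) hk
  have hfiber : ∀ i : ℕ, {y | p y = i} = V (u i) ∩ ⋂ k ∈ Finset.range i, (V (u k))ᶜ := by
    intro i
    ext y
    simp only [Set.mem_setOf_eq, Set.mem_inter_iff, Set.mem_iInter, Finset.mem_range,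
      Set.mem_compl_iff]
    constructor
    · rintro rfl
      exact ⟨hpspec y, fun k hk => hpmin y k hk⟩
    · rintro ⟨h1, h2⟩
      exact (Nat.find_eq_iff (hucov y)).mpr ⟨h1, fun k hk => h2 k hk⟩
  refine ⟨p, fun x => ?_, fun x y hxy => ?_⟩
  · rw [hfiber (p x)]
    refine IsOpen.inter (hVclopen _).isOpen ?_
    exact isOpen_biInter_finset fun k _ => (hVclopen _).isClosed.isOpen_compl
  · have h1 : d.toFun (u (p x)) x < δ/2 := hVB _ (hpspec x)
    have h2 : d.toFun (u (p y)) y < δ/2 := hVB _ (hpspec y)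
    rw [hxy] at h1
    have h3 := d.triangle x (u (p y)) y
    have h4 := d.symm (u (p y)) x
    linarith


/-! ### The rigid-metric construction machinery -/

/-- Data for the construction of a strongly rigid metric close to `d`. -/
structure Setup (X : Type) [TopologicalSpace X] (d : MetricOn X) (q : ℚ) : Type where
  hq : 0 < q
  p : ℕ → X → ℕ
  hdiam : ∀ n x y, p n x = p n y → d.toFun x y ≤ (q:ℝ) * (2:ℝ)⁻¹ ^ (n+1)
  hopen : ∀ n x, IsOpen {y | p n y = p n x}
  c : X → X
  hc0 : ∀ x, p 0 (c x) = p 0 x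
  hcc : ∀ x y, p 0 x = p 0 y → c x = c y

namespace Setup

variable {X : Type} [TopologicalSpace X] {d : MetricOn X} {q : ℚ} (S : Setup X d q)

end Setup

/-- Cumulative code of the first `n+1` partitions. -/
def Setup.sig {X : Type} [TopologicalSpace X] {d : MetricOn X} {q : ℚ} (S : Setup X d q) :
    ℕ → X → ℕ
  | 0, x => S.p 0 x
  | n+1, x => Nat.pair (Setup.sig S n x) (S.p (n+1) x)

namespace Setup

variable {X : Type} [TopologicalSpace X] {d : MetricOn X} {q : ℚ} (S : Setup X d q)

lemma sig_zero (x : X) : S.sig 0 x = S.p 0 x := rfl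

lemma sig_succ (n : ℕ) (x : X) : S.sig (n+1) x = Nat.pair (S.sig n x) (S.p (n+1) x) := rfl

lemma sig_eq_sig_of_le {m n : ℕ} (h : m ≤ n) {x y : X} (hxy : S.sig n x = S.sig n y) :
    S.sig m x = S.sig m y := by
  induction n with
  | zero => rwa [Nat.le_zero.mp h]
  | succ k ih =>
    rcases Nat.lt_succ_iff_lt_or_eq.mp (Nat.lt_succ_of_le h) with h' | h'
    · exact ih (Nat.lt_succ_iff.mp h') (Nat.pair_eq_pair.mp hxy).1
    · rwa [h']

lemma p_eq_of_sig {k n : ℕ} (h : k ≤ n) {x y : X} (hxy : S.sig n x = S.sig n y) :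
    S.p k x = S.p k y := by
  have hs : S.sig k x = S.sig k y := S.sig_eq_sig_of_le h hxy
  cases k with
  | zero => exact hs
  | succ m => exact (Nat.pair_eq_pair.mp hs).2

lemma sig_ne_of_le {m n : ℕ} (h : m ≤ n) {x y : X} (hxy : S.sig m x ≠ S.sig m y) :
    S.sig n x ≠ S.sig n y :=
  fun heq => hxy (S.sig_eq_sig_of_le h heq)

lemma exists_sig_ne {x y : X} (hxy : x ≠ y) : ∃ n, S.sig n x ≠ S.sig n y := by
  have hd : 0 < d.toFun x y := mo_pos d hxy
  have hq' : (0:ℝ) < (q:ℝ) := by exact_mod_cast S.hq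
  obtain ⟨n, hn⟩ := exists_pow_lt_of_lt_one (div_pos hd hq') (by norm_num : (2:ℝ)⁻¹ < 1)
  refine ⟨n, fun heq => ?_⟩
  have hp : S.p n x = S.p n y := S.p_eq_of_sig le_rfl heq
  have hle := S.hdiam n x y hp
  have h2 : (q:ℝ) * (2:ℝ)⁻¹ ^ (n+1) ≤ (q:ℝ) * (2:ℝ)⁻¹ ^ n :=
    mul_le_mul_of_nonneg_left (half_pow_le (Nat.le_succ n)) (le_of_lt hq')
  have h3 : (q:ℝ) * (2:ℝ)⁻¹ ^ n < d.toFun x y := by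
    rw [lt_div_iff₀ hq'] at hn
    nlinarith
  linarith

lemma isOpen_sig_fiber (n : ℕ) (x : X) : IsOpen {y | S.sig n y = S.sig n x} := by
  induction n with
  | zero => exact S.hopen 0 x
  | succ k ih =>
    have : {y | S.sig (k+1) y = S.sig (k+1) x}
        = {y | S.sig k y = S.sig k x} ∩ {y | S.p (k+1) y = S.p (k+1) x} := by
      ext y
      simp only [Set.mem_setOf_eq, Set.mem_inter_iff, sig_succ, Nat.pair_eq_pair]
    rw [this]
    exact ih.inter (S.hopen (k+1) x)

/-- Cell codes: the cell of `x` at level `n`. -/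
def cell (n : ℕ) (x : X) : ℕ := Nat.pair n (S.sig n x)

lemma cell_unpair (n : ℕ) (x : X) : (Nat.unpair (S.cell n x)).1 = n := by
  simp [cell, Nat.unpair_pair]

lemma cell_eq_iff {n : ℕ} {x y : X} : S.cell n x = S.cell n y ↔ S.sig n x = S.sig n y := by
  constructor
  · intro h; exact (Nat.pair_eq_pair.mp h).2
  · intro h; rw [cell, h, cell]

lemma le_cell (n : ℕ) (x : X) : n ≤ S.cell n x := Nat.left_le_pair _ _

lemma w_cell_le (n : ℕ) (x : X) : (2:ℝ)⁻¹ ^ (bexp (S.cell n x)) ≤ (2:ℝ)⁻¹ ^ (n+1) := by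
  refine half_pow_le ?_
  have h1 : S.cell n x < bexp (S.cell n x) := bexp_lt _
  have h2 := S.le_cell n x
  omega

/-- The coding function. -/
noncomputable def Phi (x : X) : ℝ := ∑' n, (2:ℝ)⁻¹ ^ (bexp (S.cell n x))

lemma summable_phi (x : X) : Summable (fun n => (2:ℝ)⁻¹ ^ (bexp (S.cell n x))) := by
  refine summable_of_half_bound _ (2:ℝ)⁻¹ 0 (fun j => ?_)
  rw [abs_of_pos (half_pow_pos _)]
  calc (2:ℝ)⁻¹ ^ (bexp (S.cell j x)) ≤ (2:ℝ)⁻¹ ^ (j+1) := S.w_cell_le j x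
    _ = (2:ℝ)⁻¹ * (2:ℝ)⁻¹ ^ (0 + j) := by rw [Nat.zero_add, pow_succ]; ring

lemma sum_halfpow : ∑' n : ℕ, (2:ℝ)⁻¹ ^ (n+1) = 1 := by
  have h : (fun n : ℕ => (2:ℝ)⁻¹ ^ (n+1)) = fun n : ℕ => (2:ℝ)⁻¹ ^ n * (2:ℝ)⁻¹ := by
    funext n; rw [pow_succ]
  rw [h, tsum_mul_right, tsum_geometric_of_lt_one (by norm_num) (by norm_num)]
  norm_num

lemma Phi_nonneg (x : X) : 0 ≤ S.Phi x :=
  tsum_nonneg fun n => le_of_lt (half_pow_pos _)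

lemma summable_halfpow : Summable (fun n : ℕ => (2:ℝ)⁻¹ ^ (n+1)) := by
  have h : Summable (fun n : ℕ => (2:ℝ)⁻¹ ^ n * (2:ℝ)⁻¹) :=
    (summable_geometric_of_lt_one (by norm_num) (by norm_num)).mul_right _
  exact h.congr fun n => by rw [pow_succ]

lemma Phi_le_one (x : X) : S.Phi x ≤ 1 := by
  rw [← sum_halfpow]
  exact Summable.tsum_le_tsum (fun n => S.w_cell_le n x) (S.summable_phi x) summable_halfpow

lemma Phi_sub_bound {n : ℕ} {x y : X} (h : S.sig n x = S.sig n y) :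
    |S.Phi x - S.Phi y| ≤ (2:ℝ)⁻¹ ^ n := by
  set g : ℕ → ℝ := fun k => (2:ℝ)⁻¹ ^ (bexp (S.cell k x)) - (2:ℝ)⁻¹ ^ (bexp (S.cell k y))
    with hg
  have hsg : Summable g := (S.summable_phi x).sub (S.summable_phi y)
  have hPhig : S.Phi x - S.Phi y = ∑' k, g k := (Summable.tsum_sub (S.summable_phi x) (S.summable_phi y)).symm
  have hzero : ∀ k < n + 1, g k = 0 := by
    intro k hk
    have : S.cell k x = S.cell k y :=
      S.cell_eq_iff.mpr (S.sig_eq_sig_of_le (Nat.lt_succ_iff.mp hk) h)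
    simp [hg, this]
  have hsplit := Summable.sum_add_tsum_nat_add (f := g) (n+1) hsg
  have hzsum : ∑ i ∈ Finset.range (n+1), g i = 0 :=
    Finset.sum_eq_zero fun i hi => hzero i (Finset.mem_range.mp hi)
  have htb : |∑' k, g (k + (n+1))| ≤ 2 * (2:ℝ)⁻¹ ^ (n+2) * 2 := by
    refine tsum_tail_bound _ _ _ (fun j => ?_)
    have b1 : (2:ℝ)⁻¹ ^ (bexp (S.cell (j + (n+1)) x)) ≤ (2:ℝ)⁻¹ ^ ((n+2)+j) := by
      refine le_trans (S.w_cell_le _ x) (half_pow_le (by omega))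
    have b2 : (2:ℝ)⁻¹ ^ (bexp (S.cell (j + (n+1)) y)) ≤ (2:ℝ)⁻¹ ^ ((n+2)+j) := by
      refine le_trans (S.w_cell_le _ y) (half_pow_le (by omega))
    have := abs_sub (((2:ℝ)⁻¹) ^ (bexp (S.cell (j + (n+1)) x))) (((2:ℝ)⁻¹) ^ (bexp (S.cell (j + (n+1)) y)))
    calc |g (j + (n+1))| ≤ |(2:ℝ)⁻¹ ^ (bexp (S.cell (j + (n+1)) x))| + |(2:ℝ)⁻¹ ^ (bexp (S.cell (j + (n+1)) y))| :=
          abs_sub _ _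
      _ ≤ (2:ℝ)⁻¹ ^ ((n+2)+j) + (2:ℝ)⁻¹ ^ ((n+2)+j) := by
          rw [abs_of_pos (half_pow_pos _), abs_of_pos (half_pow_pos _)]
          exact add_le_add b1 b2
      _ = 2 * (2:ℝ)⁻¹ ^ ((n+2)+j) := by ring
  have heq : S.Phi x - S.Phi y = ∑' k, g (k + (n+1)) := by
    rw [hPhig, ← hsplit, hzsum, zero_add]
  rw [heq]
  calc |∑' k, g (k + (n+1))| ≤ 2 * (2:ℝ)⁻¹ ^ (n+2) * 2 := htb
    _ = (2:ℝ)⁻¹ ^ n := by rw [pow_add]; ring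

lemma eventual_sep (T : Finset X) :
    ∃ n₀, ∀ n, n₀ ≤ n → ∀ z ∈ T, ∀ z' ∈ T, z ≠ z' → S.sig n z ≠ S.sig n z' := by
  have hev : ∀ᶠ n in Filter.atTop, ∀ z ∈ T, ∀ z' ∈ T, z ≠ z' → S.sig n z ≠ S.sig n z' := by
    rw [Filter.eventually_all_finset]
    intro z hz
    rw [Filter.eventually_all_finset]
    intro z' hz'
    by_cases hzz : z = z'
    · exact Filter.Eventually.of_forall fun n hne => absurd hzz hne
    · obtain ⟨m, hm⟩ := S.exists_sig_ne hzz
      rw [Filter.eventually_atTop]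
      exact ⟨m, fun n hn _ => S.sig_ne_of_le hn hm⟩
  rw [Filter.eventually_atTop] at hev
  exact hev

/-- The ℚ-linear independence of the `Phi` values. -/
lemma lind (T : Finset X) (co : X → ℤ) (r : ℚ)
    (h : ∑ z ∈ T, (co z : ℝ) * S.Phi z = (r:ℝ)) : ∀ z ∈ T, co z = 0 := by
  classical
  by_contra hcon
  push_neg at hcon
  obtain ⟨z₀, hz₀T, hz₀⟩ := hcon
  obtain ⟨n₀, hsep⟩ := S.eventual_sep T
  set cc : ℕ → ℤ := fun t => ∑ z ∈ T, co z * (if S.cell (Nat.unpair t).1 z = t then 1 else 0)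
    with hcc
  set N : ℕ := ∑ z ∈ T, (co z).natAbs with hN
  have hsumz : ∀ z : X, Summable (fun t : ℕ =>
      (co z : ℝ) * (if S.cell (Nat.unpair t).1 z = t then (2:ℝ)⁻¹ ^ (bexp t) else 0)) := by
    intro z
    refine summable_of_half_bound _ (|(co z : ℝ)|) 0 (fun j => ?_)
    rw [abs_mul]
    have h1 : |if S.cell (Nat.unpair j).1 z = j then (2:ℝ)⁻¹ ^ (bexp j) else 0| ≤ (2:ℝ)⁻¹ ^ (0+j) := by
      split_ifs
      · rw [abs_of_pos (half_pow_pos _), Nat.zero_add]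
        exact half_pow_le (le_of_lt (bexp_lt j))
      · simp [le_of_lt (half_pow_pos _)]
    calc |(co z : ℝ)| * |if S.cell (Nat.unpair j).1 z = j then (2:ℝ)⁻¹ ^ (bexp j) else 0|
        ≤ |(co z : ℝ)| * (2:ℝ)⁻¹ ^ (0+j) := mul_le_mul_of_nonneg_left h1 (abs_nonneg _)
      _ = |(co z : ℝ)| * (2:ℝ)⁻¹ ^ (0+j) := rfl
  have hPhi_as : ∀ z : X, S.Phi z
      = ∑' t, (if S.cell (Nat.unpair t).1 z = t then (2:ℝ)⁻¹ ^ (bexp t) else 0) := by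
    intro z
    have hinj : Function.Injective (fun n => S.cell n z) := by
      intro a b hab
      have := congrArg (fun t => (Nat.unpair t).1) hab
      simpa [S.cell_unpair] using this
    have hsupp : Function.support
        (fun t => (if S.cell (Nat.unpair t).1 z = t then (2:ℝ)⁻¹ ^ (bexp t) else 0))
        ⊆ Set.range (fun n => S.cell n z) := by
      intro t ht
      rw [Function.mem_support] at ht
      by_cases hc : S.cell (Nat.unpair t).1 z = t
      · exact ⟨(Nat.unpair t).1, hc⟩
      · simp [hc] at ht
    have heq := Function.Injective.tsum_eq hinj hsupp
    rw [← heq, Phi]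
    refine tsum_congr fun n => ?_
    simp [S.cell_unpair]
  have hkey : ∑' t, ((cc t : ℝ) * (2:ℝ)⁻¹ ^ (bexp t)) = (r:ℝ) := by
    rw [← h]
    have h1 : ∀ t : ℕ, ((cc t : ℝ) * (2:ℝ)⁻¹ ^ (bexp t))
        = ∑ z ∈ T, (co z : ℝ) * (if S.cell (Nat.unpair t).1 z = t then (2:ℝ)⁻¹ ^ (bexp t) else 0) := by
      intro t
      rw [hcc]
      push_cast
      rw [Finset.sum_mul]
      refine Finset.sum_congr rfl fun z hz => ?_
      split_ifs <;> simp
    rw [tsum_congr h1, Summable.tsum_finsetSum (fun z hz => hsumz z)]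
    refine Finset.sum_congr rfl fun z hz => ?_
    rw [tsum_mul_left, ← hPhi_as z]
  have hNbound : ∀ t, (cc t).natAbs ≤ N := by
    intro t
    have h1 : |cc t| ≤ (N:ℤ) := by
      rw [hcc, hN]
      calc |∑ z ∈ T, co z * (if S.cell (Nat.unpair t).1 z = t then 1 else 0)|
          ≤ ∑ z ∈ T, |co z * (if S.cell (Nat.unpair t).1 z = t then 1 else 0)| :=
            Finset.abs_sum_le_sum_abs _ _
        _ ≤ ∑ z ∈ T, |co z| := by
            refine Finset.sum_le_sum fun z hz => ?_
            rw [abs_mul]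
            split_ifs <;> simp
        _ = ((∑ z ∈ T, (co z).natAbs : ℕ) : ℤ) := by
            push_cast
            refine Finset.sum_congr rfl fun z hz => ?_
            rw [Int.abs_eq_natAbs]
    rw [Int.abs_eq_natAbs, hN] at h1
    exact_mod_cast h1
  have hinf : ∀ M, ∃ t, M ≤ t ∧ cc t ≠ 0 := by
    intro M
    set n := max M n₀ with hn
    refine ⟨S.cell n z₀, le_trans (le_max_left M n₀) (S.le_cell n z₀), ?_⟩
    rw [hcc]
    have hcell : ∀ z ∈ T, (S.cell (Nat.unpair (S.cell n z₀)).1 z = S.cell n z₀) ↔ z = z₀ := by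
      intro z hz
      rw [S.cell_unpair]
      constructor
      · intro hc
        by_contra hne
        exact hsep n (le_max_right M n₀) z hz z₀ hz₀T hne (S.cell_eq_iff.mp hc)
      · rintro rfl; rfl
    have hval : (∑ z ∈ T, co z * (if S.cell (Nat.unpair (S.cell n z₀)).1 z = S.cell n z₀ then 1 else 0)) = co z₀ := by
      rw [Finset.sum_eq_single_of_mem z₀ hz₀T
        (fun z hz hne => by simp [(hcell z hz).not.mpr hne])]
      simp [(hcell z₀ hz₀T).mpr rfl]
    simp only []
    rw [hval]
    exact hz₀
  exact keyIrrat cc N hNbound hinf r hkey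

/-- Injectivity corollary. -/
lemma Phi_inj {x y : X} (h : S.Phi x = S.Phi y) : x = y := by
  classical
  by_contra hxy
  have hsum : ∑ z ∈ ({x, y} : Finset X),
      (((if z = x then 1 else 0) - (if z = y then 1 else 0) : ℤ) : ℝ) * S.Phi z = ((0:ℚ):ℝ) := by
    rw [Finset.sum_insert (by simp [hxy]), Finset.sum_singleton]
    simp [hxy, Ne.symm hxy]
    linarith
  have := S.lind _ _ _ hsum x (by simp)
  simp [hxy] at this

/-- The main case analysis: if `Φx - Φy - (Φa - Φb)` is rational then `x = a` and `y = b`. -/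
lemma caseA {x y a b : X} (hxy : x ≠ y) (hab : a ≠ b) (r : ℚ)
    (h : S.Phi x - S.Phi y - (S.Phi a - S.Phi b) = (r:ℝ)) : x = a ∧ y = b := by
  classical
  set co : X → ℤ := fun z => (if z = x then 1 else 0) - (if z = y then 1 else 0)
    - (if z = a then 1 else 0) + (if z = b then 1 else 0) with hco
  set T : Finset X := {x, y, a, b} with hT
  have hsum : ∑ z ∈ T, ((co z : ℤ) : ℝ) * S.Phi z = (r:ℝ) := by
    rw [← h]
    have hexp : ∀ z, ((co z : ℤ) : ℝ) = (if z = x then (1:ℝ) else 0) - (if z = y then 1 else 0)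
        - (if z = a then 1 else 0) + (if z = b then 1 else 0) := by
      intro z
      simp only [hco, Int.cast_add, Int.cast_sub, apply_ite (fun (k:ℤ) => (k:ℝ)),
        Int.cast_one, Int.cast_zero]
    calc ∑ z ∈ T, ((co z : ℤ) : ℝ) * S.Phi z
        = ∑ z ∈ T, ((if z = x then (1:ℝ) else 0) * S.Phi z - (if z = y then 1 else 0) * S.Phi z
          - (if z = a then 1 else 0) * S.Phi z + (if z = b then 1 else 0) * S.Phi z) := by
          refine Finset.sum_congr rfl fun z hz => ?_
          rw [hexp z]; ring
      _ = S.Phi x - S.Phi y - (S.Phi a - S.Phi b) := by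
          have e1 : ∀ u ∈ T, ∑ z ∈ T, (if z = u then (1:ℝ) else 0) * S.Phi z = S.Phi u := by
            intro u hu
            have hz : ∀ z, (if z = u then (1:ℝ) else 0) * S.Phi z = (if z = u then S.Phi z else 0) := by
              intro z; split_ifs <;> simp
            rw [Finset.sum_congr rfl fun z _ => hz z, Finset.sum_ite_eq' T u (fun z => S.Phi z),
              if_pos hu]
          rw [Finset.sum_add_distrib, Finset.sum_sub_distrib, Finset.sum_sub_distrib,
            e1 x (by simp [hT]), e1 y (by simp [hT]), e1 a (by simp [hT]), e1 b (by simp [hT])]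
          ring
  have hx := S.lind T co r hsum x (by simp [hT])
  have hy := S.lind T co r hsum y (by simp [hT])
  rw [hco] at hx hy
  simp only [if_pos rfl] at hx hy
  constructor
  · by_contra hxa
    simp [hxy, hxa] at hx
    split_ifs at hx <;> omega
  · by_contra hyb
    simp [Ne.symm hxy, hyb] at hy
    split_ifs at hy <;> omega

end Setup
namespace Setup
lemma hqR {X : Type} [TopologicalSpace X] {d : MetricOn X} {q : ℚ} (S : Setup X d q) :
    (0:ℝ) < (q:ℝ) := by
  have := S.hq
  exact_mod_cast this

lemma qpow_nonneg {X : Type} [TopologicalSpace X] {d : MetricOn X} {q : ℚ} (S : Setup X d q)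
    (n : ℕ) : (0:ℝ) ≤ (q:ℝ) * (2:ℝ)⁻¹ ^ n :=
  le_of_lt (mul_pos S.hqR (half_pow_pos n))

variable {X : Type} [TopologicalSpace X] {d : MetricOn X} {q : ℚ} (S : Setup X d q)


/-- Rational-grid approximation of `d` on level-0 representatives. -/
noncomputable def D0 (x y : X) : ℝ := (q:ℝ) * ⌈ d.toFun (S.c x) (S.c y) / (q:ℝ) ⌉₊

/-- Tree pseudometric recording separation levels. -/
noncomputable def D1 (x y : X) : ℝ :=
  ∑' n, (if S.sig n x = S.sig n y then (0:ℝ) else (q:ℝ) * (2:ℝ)⁻¹ ^ (n+1))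

noncomputable def phiq (x : X) : ℝ := (q:ℝ) * S.Phi x

/-- The strongly rigid metric. -/
noncomputable def E (x y : X) : ℝ := S.D0 x y + S.D1 x y + |S.phiq x - S.phiq y|

lemma D0_nonneg (x y : X) : 0 ≤ S.D0 x y :=
  mul_nonneg (le_of_lt S.hqR) (Nat.cast_nonneg _)

lemma D0_symm (x y : X) : S.D0 x y = S.D0 y x := by rw [D0, D0, d.symm]

lemma D0_eq_zero (x y : X) (h : S.p 0 x = S.p 0 y) : S.D0 x y = 0 := by
  rw [D0, S.hcc x y h, d.refl]
  simp

lemma D0_triangle (x y z : X) : S.D0 x z ≤ S.D0 x y + S.D0 y z := by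
  rw [D0, D0, D0, ← mul_add]
  refine mul_le_mul_of_nonneg_left ?_ (le_of_lt S.hqR)
  have hcast : ((⌈d.toFun (S.c x) (S.c y) / (q:ℝ)⌉₊ + ⌈d.toFun (S.c y) (S.c z) / (q:ℝ)⌉₊ : ℕ) : ℝ)
      = (⌈d.toFun (S.c x) (S.c y) / (q:ℝ)⌉₊ : ℝ) + (⌈d.toFun (S.c y) (S.c z) / (q:ℝ)⌉₊ : ℝ) := by
    push_cast; rfl
  rw [← hcast]
  refine Nat.cast_le.mpr (Nat.ceil_le.mpr ?_)
  rw [hcast]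
  calc d.toFun (S.c x) (S.c z) / (q:ℝ)
      ≤ (d.toFun (S.c x) (S.c y) + d.toFun (S.c y) (S.c z)) / (q:ℝ) := by
        have htri := d.triangle (S.c x) (S.c y) (S.c z)
        have hq0 : (0:ℝ) ≤ (q:ℝ) := le_of_lt S.hqR
        gcongr
    _ = d.toFun (S.c x) (S.c y) / (q:ℝ) + d.toFun (S.c y) (S.c z) / (q:ℝ) := add_div _ _ _
    _ ≤ (⌈d.toFun (S.c x) (S.c y) / (q:ℝ)⌉₊ : ℝ) + (⌈d.toFun (S.c y) (S.c z) / (q:ℝ)⌉₊ : ℝ) :=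
        add_le_add (Nat.le_ceil _) (Nat.le_ceil _)

lemma dist_c (x : X) : d.toFun x (S.c x) ≤ (q:ℝ) * (2:ℝ)⁻¹ := by
  have := S.hdiam 0 x (S.c x) (S.hc0 x).symm
  simpa using this

lemma D0_close (x y : X) : |S.D0 x y - d.toFun x y| ≤ 2 * (q:ℝ) := by
  set t := d.toFun (S.c x) (S.c y) with ht
  have ht0 : 0 ≤ t := mo_nonneg d _ _
  have hq0 : (q:ℝ) ≠ 0 := ne_of_gt S.hqR
  have h1 : t ≤ S.D0 x y := by
    rw [D0]
    calc t = (t / (q:ℝ)) * (q:ℝ) := (div_mul_cancel₀ t hq0).symm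
      _ ≤ (⌈t/(q:ℝ)⌉₊ : ℝ) * (q:ℝ) := mul_le_mul_of_nonneg_right (Nat.le_ceil _) (le_of_lt S.hqR)
      _ = (q:ℝ) * ⌈t/(q:ℝ)⌉₊ := mul_comm _ _
  have h2 : S.D0 x y < t + (q:ℝ) := by
    rw [D0]
    have := Nat.ceil_lt_add_one (div_nonneg ht0 (le_of_lt S.hqR))
    calc (q:ℝ) * ⌈t / (q:ℝ)⌉₊ < (q:ℝ) * (t / (q:ℝ) + 1) :=
          mul_lt_mul_of_pos_left this S.hqR
      _ = t + (q:ℝ) := by field_simp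
  have h3 : |t - d.toFun x y| ≤ (q:ℝ) := by
    have hxc := S.dist_c x
    have hyc := S.dist_c y
    rw [show (q:ℝ)*(2:ℝ)⁻¹ = (q:ℝ)/2 by ring] at hxc hyc
    have ta := d.triangle (S.c x) x (S.c y)
    have tb := d.triangle x y (S.c y)
    have td := d.triangle x (S.c x) y
    have te := d.triangle (S.c x) (S.c y) y
    have s1 := d.symm x (S.c x)
    have s2 := d.symm y (S.c y)
    have s3 := d.symm (S.c y) y
    rw [abs_le]
    constructor <;> linarith
  rw [abs_le] at h3 ⊢
  constructor <;> linarith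

lemma summable_D1 (x y : X) :
    Summable (fun n => (if S.sig n x = S.sig n y then (0:ℝ) else (q:ℝ) * (2:ℝ)⁻¹ ^ (n+1))) := by
  refine Summable.of_nonneg_of_le (fun n => ?_) (fun n => ?_) (summable_halfpow.mul_left (q:ℝ))
  · split_ifs
    · exact le_refl 0
    · exact S.qpow_nonneg _
  · split_ifs
    · exact S.qpow_nonneg _
    · exact le_refl _

lemma D1_nonneg (x y : X) : 0 ≤ S.D1 x y := by
  refine tsum_nonneg fun n => ?_
  split_ifs
  · exact le_refl 0
  · exact S.qpow_nonneg _

lemma D1_symm (x y : X) : S.D1 x y = S.D1 y x := by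
  rw [D1, D1]
  refine tsum_congr fun n => ?_
  by_cases h : S.sig n x = S.sig n y
  · rw [if_pos h, if_pos h.symm]
  · rw [if_neg h, if_neg (fun h' => h h'.symm)]

lemma D1_self (x : X) : S.D1 x x = 0 := by
  rw [D1]
  simp

lemma sum_q_halfpow : ∑' n : ℕ, (q:ℝ) * (2:ℝ)⁻¹ ^ (n+1) = (q:ℝ) := by
  rw [tsum_mul_left, sum_halfpow, mul_one]

lemma D1_le (x y : X) : S.D1 x y ≤ (q:ℝ) := by
  rw [← sum_q_halfpow (q := q)]
  refine Summable.tsum_le_tsum (fun n => ?_) (S.summable_D1 x y) (summable_halfpow.mul_left (q:ℝ))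
  split_ifs
  · exact S.qpow_nonneg _
  · exact le_refl _

lemma D1_ge (x y : X) {n : ℕ} (h : S.sig n x ≠ S.sig n y) :
    (q:ℝ) * (2:ℝ)⁻¹ ^ (n+1) ≤ S.D1 x y := by
  have := Summable.le_tsum (S.summable_D1 x y) n (fun m _ => by
    split_ifs
    · exact le_refl 0
    · exact S.qpow_nonneg _)
  rwa [if_neg h] at this

lemma D1_tail (x y : X) {n : ℕ} (h : S.sig n x = S.sig n y) :
    S.D1 x y ≤ (q:ℝ) * (2:ℝ)⁻¹ ^ (n+1) := by
  set f : ℕ → ℝ := fun k => (if S.sig k x = S.sig k y then (0:ℝ) else (q:ℝ) * (2:ℝ)⁻¹ ^ (k+1))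
    with hf
  have hsf : Summable f := S.summable_D1 x y
  have hzero : ∀ k < n + 1, f k = 0 := by
    intro k hk
    simp only [hf]
    rw [if_pos (S.sig_eq_sig_of_le (Nat.lt_succ_iff.mp hk) h)]
  have hsplit := Summable.sum_add_tsum_nat_add (f := f) (n+1) hsf
  have hzsum : ∑ i ∈ Finset.range (n+1), f i = 0 :=
    Finset.sum_eq_zero fun i hi => hzero i (Finset.mem_range.mp hi)
  have htail : ∑' k, f (k + (n+1)) ≤ ∑' k : ℕ, (q:ℝ) * (2:ℝ)⁻¹ ^ (n+2) * (2:ℝ)⁻¹ ^ k := by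
    refine Summable.tsum_le_tsum (fun k => ?_) ((summable_nat_add_iff (n+1)).mpr hsf)
      ((summable_geometric_of_lt_one (by norm_num) (by norm_num)).mul_left _)
    show (if S.sig (k + (n+1)) x = S.sig (k + (n+1)) y then (0:ℝ) else (q:ℝ) * (2:ℝ)⁻¹ ^ (k + (n+1) + 1))
      ≤ (q:ℝ) * (2:ℝ)⁻¹ ^ (n+2) * (2:ℝ)⁻¹ ^ k
    split_ifs
    · rw [mul_assoc, ← pow_add]
      exact S.qpow_nonneg _
    · rw [show k + (n+1) + 1 = (n+2) + k by omega, pow_add]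
      ring_nf
      exact le_refl _
  have hgeo : ∑' k : ℕ, (q:ℝ) * (2:ℝ)⁻¹ ^ (n+2) * (2:ℝ)⁻¹ ^ k = (q:ℝ) * (2:ℝ)⁻¹ ^ (n+1) := by
    rw [tsum_mul_left, tsum_geometric_of_lt_one (by norm_num) (by norm_num)]
    rw [pow_succ]
    norm_num
    ring
  have : S.D1 x y = ∑' k, f (k + (n+1)) := by rw [D1, ← hsplit, hzsum, zero_add]
  rw [this]
  exact le_trans htail hgeo.le

lemma D1_triangle (x y z : X) : S.D1 x z ≤ S.D1 x y + S.D1 y z := by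
  have hpt : ∀ n : ℕ, (if S.sig n x = S.sig n z then (0:ℝ) else (q:ℝ) * (2:ℝ)⁻¹ ^ (n+1))
      ≤ (if S.sig n x = S.sig n y then (0:ℝ) else (q:ℝ) * (2:ℝ)⁻¹ ^ (n+1))
      + (if S.sig n y = S.sig n z then (0:ℝ) else (q:ℝ) * (2:ℝ)⁻¹ ^ (n+1)) := by
    intro n
    by_cases h1 : S.sig n x = S.sig n z
    · rw [if_pos h1]
      have : (0:ℝ) ≤ (if S.sig n x = S.sig n y then (0:ℝ) else (q:ℝ) * (2:ℝ)⁻¹ ^ (n+1)) := by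
        split_ifs
        · exact le_refl 0
        · exact S.qpow_nonneg _
      have h2 : (0:ℝ) ≤ (if S.sig n y = S.sig n z then (0:ℝ) else (q:ℝ) * (2:ℝ)⁻¹ ^ (n+1)) := by
        split_ifs
        · exact le_refl 0
        · exact S.qpow_nonneg _
      linarith
    · rw [if_neg h1]
      by_cases h2 : S.sig n x = S.sig n y
      · have h3 : S.sig n y ≠ S.sig n z := fun h' => h1 (h2.trans h')
        rw [if_pos h2, if_neg h3]
        linarith
      · rw [if_neg h2]
        have h4 : (0:ℝ) ≤ (if S.sig n y = S.sig n z then (0:ℝ) else (q:ℝ) * (2:ℝ)⁻¹ ^ (n+1)) := by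
          split_ifs
          · exact le_refl 0
          · exact S.qpow_nonneg _
        linarith
  calc S.D1 x z ≤ ∑' n, ((if S.sig n x = S.sig n y then (0:ℝ) else (q:ℝ) * (2:ℝ)⁻¹ ^ (n+1))
        + (if S.sig n y = S.sig n z then (0:ℝ) else (q:ℝ) * (2:ℝ)⁻¹ ^ (n+1))) :=
        Summable.tsum_le_tsum hpt (S.summable_D1 x z) ((S.summable_D1 x y).add (S.summable_D1 y z))
    _ = S.D1 x y + S.D1 y z := Summable.tsum_add (S.summable_D1 x y) (S.summable_D1 y z)

lemma D1_rat (x y : X) (hxy : x ≠ y) : ∃ rr : ℚ, S.D1 x y = (rr:ℝ) := by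
  classical
  have hex : ∃ n, S.sig n x ≠ S.sig n y := S.exists_sig_ne hxy
  set n₀ := Nat.find hex with hn₀
  have hspec : S.sig n₀ x ≠ S.sig n₀ y := Nat.find_spec hex
  have hmin : ∀ k < n₀, S.sig k x = S.sig k y := by
    intro k hk
    exact not_not.mp (Nat.find_min hex hk)
  refine ⟨q * (1/2)^n₀, ?_⟩
  set f : ℕ → ℝ := fun k => (if S.sig k x = S.sig k y then (0:ℝ) else (q:ℝ) * (2:ℝ)⁻¹ ^ (k+1))
    with hf
  have hsf : Summable f := S.summable_D1 x y
  have hsplit := Summable.sum_add_tsum_nat_add (f := f) n₀ hsf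
  have hzsum : ∑ i ∈ Finset.range n₀, f i = 0 := by
    refine Finset.sum_eq_zero fun i hi => ?_
    simp only [hf]
    rw [if_pos (hmin i (Finset.mem_range.mp hi))]
  have hne' : ∀ k, S.sig (k + n₀) x ≠ S.sig (k + n₀) y :=
    fun k => S.sig_ne_of_le (Nat.le_add_left n₀ k) hspec
  have htval : ∑' k, f (k + n₀) = (q:ℝ) * (2:ℝ)⁻¹ ^ n₀ := by
    have : ∀ k : ℕ, f (k + n₀) = ((q:ℝ) * (2:ℝ)⁻¹ ^ (n₀+1)) * (2:ℝ)⁻¹ ^ k := by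
      intro k
      simp only [hf]
      rw [if_neg (hne' k), show k + n₀ + 1 = (n₀+1) + k by omega, pow_add]
      ring
    rw [tsum_congr this, tsum_mul_left, tsum_geometric_of_lt_one (by norm_num) (by norm_num)]
    rw [pow_succ]
    norm_num
    ring
  have : S.D1 x y = ∑' k, f (k + n₀) := by rw [D1, ← hsplit, hzsum, zero_add]
  rw [this, htval]
  push_cast
  ring

lemma phiq_abs (x y : X) : |S.phiq x - S.phiq y| = (q:ℝ) * |S.Phi x - S.Phi y| := by
  rw [phiq, phiq, ← mul_sub, abs_mul, abs_of_pos S.hqR]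

lemma phiq_diff_le (x y : X) : |S.phiq x - S.phiq y| ≤ (q:ℝ) := by
  rw [S.phiq_abs]
  have h1 : |S.Phi x - S.Phi y| ≤ 1 := by
    rw [abs_sub_le_iff]
    constructor
    · linarith [S.Phi_le_one x, S.Phi_nonneg y]
    · linarith [S.Phi_le_one y, S.Phi_nonneg x]
  calc (q:ℝ) * |S.Phi x - S.Phi y| ≤ (q:ℝ) * 1 :=
        mul_le_mul_of_nonneg_left h1 (le_of_lt S.hqR)
    _ = (q:ℝ) := mul_one _

lemma E_nonneg (x y : X) : 0 ≤ S.E x y :=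
  add_nonneg (add_nonneg (S.D0_nonneg x y) (S.D1_nonneg x y)) (abs_nonneg _)

lemma E_symm (x y : X) : S.E x y = S.E y x := by
  rw [E, E, S.D0_symm, S.D1_symm, abs_sub_comm]

lemma E_self (x : X) : S.E x x = 0 := by
  rw [E, S.D0_eq_zero x x rfl, S.D1_self]
  simp

lemma E_eq_zero {x y : X} (h : S.E x y = 0) : x = y := by
  have h0 := S.D0_nonneg x y
  have h1 := S.D1_nonneg x y
  have h2 := abs_nonneg (S.phiq x - S.phiq y)
  have habs : |S.phiq x - S.phiq y| = 0 := by rw [E] at h; linarith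
  rw [S.phiq_abs] at habs
  rcases mul_eq_zero.mp habs with hq0 | hphi
  · exact absurd hq0 (ne_of_gt S.hqR)
  · exact S.Phi_inj (sub_eq_zero.mp (abs_eq_zero.mp hphi))

lemma E_triangle (x y z : X) : S.E x z ≤ S.E x y + S.E y z := by
  have h0 := S.D0_triangle x y z
  have h1 := S.D1_triangle x y z
  have h2 : |S.phiq x - S.phiq z| ≤ |S.phiq x - S.phiq y| + |S.phiq y - S.phiq z| :=
    abs_sub_le _ _ _
  rw [E, E, E]
  linarith

lemma E_close (x y : X) : |S.E x y - d.toFun x y| ≤ 4 * (q:ℝ) := by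
  have h0 := S.D0_close x y
  have h1 := S.D1_nonneg x y
  have h1' := S.D1_le x y
  have h2 := abs_nonneg (S.phiq x - S.phiq y)
  have h2' := S.phiq_diff_le x y
  rw [E]
  rw [abs_le] at h0 ⊢
  constructor <;> linarith

lemma E_tail {n : ℕ} {x y : X} (h : S.sig n x = S.sig n y) :
    S.E x y ≤ 2 * (q:ℝ) * (2:ℝ)⁻¹ ^ n := by
  have h0 : S.D0 x y = 0 := S.D0_eq_zero x y (S.p_eq_of_sig (Nat.zero_le n) h)
  have h1 := S.D1_tail x y h
  have h2 : |S.phiq x - S.phiq y| ≤ (q:ℝ) * (2:ℝ)⁻¹ ^ n := by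
    rw [S.phiq_abs]
    exact mul_le_mul_of_nonneg_left (S.Phi_sub_bound h) (le_of_lt S.hqR)
  have h3 : (q:ℝ) * (2:ℝ)⁻¹ ^ (n+1) ≤ (q:ℝ) * (2:ℝ)⁻¹ ^ n :=
    mul_le_mul_of_nonneg_left (half_pow_le (Nat.le_succ n)) (le_of_lt S.hqR)
  rw [E, h0]
  linarith

lemma E_lower {n : ℕ} {x y : X} (h : S.E x y < (q:ℝ) * (2:ℝ)⁻¹ ^ (n+1)) :
    d.toFun x y ≤ (q:ℝ) * (2:ℝ)⁻¹ ^ (n+1) := by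
  by_cases hs : S.sig n x = S.sig n y
  · exact S.hdiam n x y (S.p_eq_of_sig le_rfl hs)
  · have hge := S.D1_ge x y hs
    have h0 := S.D0_nonneg x y
    have h2 := abs_nonneg (S.phiq x - S.phiq y)
    rw [E] at h
    linarith

/-- Strong rigidity of `E`: equal distances come from equal pairs. -/
lemma E_SR {x y a b : X} (hxy : x ≠ y) (hab : a ≠ b) (h : S.E x y = S.E a b) :
    (x = a ∧ y = b) ∨ (x = b ∧ y = a) := by
  obtain ⟨r1, hr1⟩ := S.D1_rat x y hxy
  obtain ⟨r2, hr2⟩ := S.D1_rat a b hab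
  set s1 : ℚ := q * (⌈ d.toFun (S.c x) (S.c y) / (q:ℝ) ⌉₊ : ℚ) with hs1
  set s2 : ℚ := q * (⌈ d.toFun (S.c a) (S.c b) / (q:ℝ) ⌉₊ : ℚ) with hs2
  have hD0x : S.D0 x y = (s1 : ℝ) := by rw [D0, hs1]; push_cast; ring
  have hD0a : S.D0 a b = (s2 : ℝ) := by rw [D0, hs2]; push_cast; ring
  set r : ℚ := ((s2 + r2) - (s1 + r1)) / q with hrdef
  have hphieq : |S.Phi x - S.Phi y| - |S.Phi a - S.Phi b| = (r:ℝ) := by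
    have hx' := S.phiq_abs x y
    have ha' := S.phiq_abs a b
    have heq : (q:ℝ) * |S.Phi x - S.Phi y| - (q:ℝ) * |S.Phi a - S.Phi b|
        = ((s2:ℝ) + (r2:ℝ)) - ((s1:ℝ) + (r1:ℝ)) := by
      rw [E, E] at h
      linarith [h, hr1, hr2, hD0x, hD0a, hx', ha']
    have hq0 : (q:ℝ) ≠ 0 := ne_of_gt S.hqR
    have hrr : (r:ℝ) = (((s2:ℝ) + (r2:ℝ)) - ((s1:ℝ) + (r1:ℝ))) / (q:ℝ) := by
      rw [hrdef]; push_cast; ring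
    rw [hrr, ← heq]
    field_simp
  rcases abs_cases (S.Phi x - S.Phi y) with ⟨e1, _⟩ | ⟨e1, _⟩ <;>
    rcases abs_cases (S.Phi a - S.Phi b) with ⟨e2, _⟩ | ⟨e2, _⟩
  · exact Or.inl (S.caseA hxy hab r (by rw [e1, e2] at hphieq; linarith))
  · refine Or.inr ?_
    obtain ⟨h1, h2⟩ := S.caseA hxy (Ne.symm hab) r
      (by rw [e1, e2] at hphieq; linarith)
    exact ⟨h1, h2⟩
  · refine Or.inr ?_
    obtain ⟨h1, h2⟩ := S.caseA (Ne.symm hxy) hab r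
      (by rw [e1, e2] at hphieq; linarith)
    exact ⟨h2, h1⟩
  · refine Or.inl ?_
    obtain ⟨h1, h2⟩ := S.caseA (Ne.symm hxy) (Ne.symm hab) r
      (by rw [e1, e2] at hphieq; linarith)
    exact ⟨h2, h1⟩

/-- Package `E` as an element of `Met(X)`. -/
noncomputable def toMetricOn : MetricOn X where
  toFun := S.E
  symm := S.E_symm
  refl := S.E_self
  eq_of := fun _ _ h => S.E_eq_zero h
  triangle := S.E_triangle
  isOpen_iff := by
    intro s
    constructor
    · intro hs x hx
      obtain ⟨ε, hε, hb⟩ := (d.isOpen_iff s).mp hs x hx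
      obtain ⟨n, hn⟩ := exists_pow_lt_of_lt_one (div_pos hε S.hqR) (by norm_num : (2:ℝ)⁻¹ < 1)
      have hlt : (q:ℝ) * (2:ℝ)⁻¹ ^ (n+1) < ε := by
        rw [lt_div_iff₀ S.hqR] at hn
        have := mul_le_mul_of_nonneg_left (half_pow_le (Nat.le_succ n)) (le_of_lt S.hqR)
        calc (q:ℝ) * (2:ℝ)⁻¹ ^ (n+1) ≤ (q:ℝ) * (2:ℝ)⁻¹ ^ n := this
          _ < ε := by nlinarith
      refine ⟨(q:ℝ) * (2:ℝ)⁻¹ ^ (n+1), mul_pos S.hqR (half_pow_pos _), fun y hy => ?_⟩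
      exact hb y (lt_of_le_of_lt (S.E_lower hy) hlt)
    · intro hcond
      rw [isOpen_iff_mem_nhds]
      intro x hx
      obtain ⟨ε, hε, hb⟩ := hcond x hx
      obtain ⟨n, hn⟩ := exists_pow_lt_of_lt_one
        (div_pos hε (by linarith [S.hqR] : (0:ℝ) < 2 * (q:ℝ))) (by norm_num : (2:ℝ)⁻¹ < 1)
      have hlt : 2 * (q:ℝ) * (2:ℝ)⁻¹ ^ n < ε := by
        rw [lt_div_iff₀ (by linarith [S.hqR] : (0:ℝ) < 2 * (q:ℝ))] at hn
        nlinarith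
      refine Filter.mem_of_superset ((S.isOpen_sig_fiber n x).mem_nhds rfl) ?_
      intro y hy
      exact hb y (lt_of_le_of_lt (S.E_tail (id (Set.mem_setOf_eq ▸ hy)).symm) hlt)

end Setup

lemma exists_setup [TopologicalSpace.MetrizableSpace X] [SigmaCompactSpace X] [Nonempty X]
    (hX : StronglyZeroDim X) (d : MetricOn X) (q : ℚ) (hq : 0 < q) :
    Nonempty (Setup X d q) := by
  classical
  have hqR : (0:ℝ) < (q:ℝ) := by exact_mod_cast hq
  have hpart : ∀ n : ℕ, ∃ p : X → ℕ, (∀ x, IsOpen {y | p y = p x}) ∧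
      (∀ x y, p x = p y → d.toFun x y ≤ (q:ℝ) * (2:ℝ)⁻¹ ^ (n+1)) :=
    fun n => exists_part hX d (mul_pos hqR (half_pow_pos (n+1)))
  choose p hopen hdiam using hpart
  have hrep : ∀ i : ℕ, ∃ z : X, (∃ y, p 0 y = i) → p 0 z = i := by
    intro i
    by_cases h : ∃ y, p 0 y = i
    · obtain ⟨y, hy⟩ := h
      exact ⟨y, fun _ => hy⟩
    · exact ⟨Classical.arbitrary X, fun hc => absurd hc h⟩
  choose rep hrepspec using hrep
  exact ⟨{ hq := hq, p := p, hdiam := fun n x y h => hdiam n x y h,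
           hopen := fun n x => hopen n x,
           c := fun x => rep (p 0 x),
           hc0 := fun x => hrepspec (p 0 x) ⟨x, rfl⟩,
           hcc := fun x y h => congrArg rep h }⟩

/-- Strong rigidity predicate. -/
def SRel (e : MetricOn X) : Prop :=
  ∀ x y a b : X, x ≠ y → a ≠ b → e.toFun x y = e.toFun a b →
    (x = a ∧ y = b) ∨ (x = b ∧ y = a)

/-- Density: near any metric there is a strongly rigid one. -/
lemma exists_SR_close [TopologicalSpace.MetrizableSpace X] [SigmaCompactSpace X] [Nonempty X]
    (hX : StronglyZeroDim X) (d : MetricOn X) {δ : ℝ} (hδ : 0 < δ) :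
    ∃ e : MetricOn X, SRel e ∧ supDist d e < ENNReal.ofReal δ := by
  obtain ⟨q, hq0, hq5⟩ := exists_rat_btwn (show (0:ℝ) < δ/5 by linarith)
  have hq : 0 < q := by exact_mod_cast hq0
  obtain ⟨S⟩ := exists_setup hX d q hq
  refine ⟨S.toMetricOn, fun x y a b hxy hab h => S.E_SR hxy hab h, ?_⟩
  have hb : ∀ x y, |d.toFun x y - S.toMetricOn.toFun x y| ≤ 4*(q:ℝ) := by
    intro x y
    rw [abs_sub_comm]
    exact S.E_close x y
  calc supDist d S.toMetricOn ≤ ENNReal.ofReal (4*(q:ℝ)) := supDist_le hb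
    _ < ENNReal.ofReal δ := by
        rw [ENNReal.ofReal_lt_ofReal_iff hδ]
        linarith

/-- The open sets whose intersection consists of strongly rigid metrics. -/
def Uset (X : Type) [TopologicalSpace X] [SigmaCompactSpace X] (n m : ℕ) :
    Set (MetricOn X) :=
  {e | ∃ γ > (0:ℝ), ∀ x ∈ compactCovering X n, ∀ y ∈ compactCovering X n,
    ∀ a ∈ compactCovering X n, ∀ b ∈ compactCovering X n,
    1/(m+1:ℝ) - γ ≤ e.toFun x y → 1/(m+1:ℝ) - γ ≤ e.toFun x a → 1/(m+1:ℝ) - γ ≤ e.toFun x b →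
    γ < |e.toFun x y - e.toFun a b|}

lemma isOpen_Uset [SigmaCompactSpace X] (n m : ℕ) : IsOpen (Uset X n m) := by
  refine isOpen_of_balls fun e he => ?_
  obtain ⟨γ, hγ, hP⟩ := he
  refine ⟨γ/4, by linarith, fun f hf => ?_⟩
  simp only [Set.mem_setOf_eq] at hf
  have pw : ∀ u v : X, |e.toFun u v - f.toFun u v| < γ/4 := pair_lt hf
  refine ⟨γ/4, by linarith, ?_⟩
  intro x hx y hy a ha b hb h1 h2 h3
  have pxy := pw x y
  have pxa := pw x a
  have pxb := pw x b
  have pab := pw a b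
  have c1 : 1/(m+1:ℝ) - γ ≤ e.toFun x y := by
    rw [abs_lt] at pxy; linarith
  have c2 : 1/(m+1:ℝ) - γ ≤ e.toFun x a := by
    rw [abs_lt] at pxa; linarith
  have c3 : 1/(m+1:ℝ) - γ ≤ e.toFun x b := by
    rw [abs_lt] at pxb; linarith
  have hgap := hP x hx y hy a ha b hb c1 c2 c3
  have ht : |e.toFun x y - e.toFun a b|
      ≤ |e.toFun x y - f.toFun x y| + |f.toFun x y - f.toFun a b|
        + |f.toFun a b - e.toFun a b| := by
    calc |e.toFun x y - e.toFun a b|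
        = |(e.toFun x y - f.toFun x y) + ((f.toFun x y - f.toFun a b)
            + (f.toFun a b - e.toFun a b))| := by ring_nf
      _ ≤ |e.toFun x y - f.toFun x y| + |(f.toFun x y - f.toFun a b)
            + (f.toFun a b - e.toFun a b)| := abs_add_le _ _
      _ ≤ |e.toFun x y - f.toFun x y| + (|f.toFun x y - f.toFun a b|
            + |f.toFun a b - e.toFun a b|) := by
          have := abs_add_le (f.toFun x y - f.toFun a b) (f.toFun a b - e.toFun a b)
          linarith
      _ = _ := by ring
  have pab' : |f.toFun a b - e.toFun a b| < γ/4 := by rw [abs_sub_comm]; exact pab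
  linarith

lemma SRel_mem_Uset [SigmaCompactSpace X] {e : MetricOn X} (he : SRel e) (n m : ℕ) :
    e ∈ Uset X n m := by
  classical
  set K := compactCovering X n with hK
  by_cases hKne : K.Nonempty
  · set g : X × X × X × X → ℝ := fun w =>
      max (max (1/(m+1:ℝ) - e.toFun w.1 w.2.1) (1/(m+1:ℝ) - e.toFun w.1 w.2.2.1))
        (max (1/(m+1:ℝ) - e.toFun w.1 w.2.2.2) |e.toFun w.1 w.2.1 - e.toFun w.2.2.1 w.2.2.2|)
      with hg
    have hm1 : (0:ℝ) < 1/(m+1:ℝ) := by positivity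
    have hgpos : ∀ w : X × X × X × X, 0 < g w := by
      rintro ⟨x, y, a, b⟩
      rw [hg]
      simp only []
      by_cases h1 : 1/(m+1:ℝ) ≤ e.toFun x y
      · by_cases h2 : 1/(m+1:ℝ) ≤ e.toFun x a
        · by_cases h3 : 1/(m+1:ℝ) ≤ e.toFun x b
          · have hxy : x ≠ y := by
              intro hh; rw [hh, e.refl] at h1; linarith
            have hxa : x ≠ a := by
              intro hh; rw [hh, e.refl] at h2; linarith
            have hxb : x ≠ b := by
              intro hh; rw [hh, e.refl] at h3; linarith
            have habs : 0 < |e.toFun x y - e.toFun a b| := by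
              rcases eq_or_ne (e.toFun x y) (e.toFun a b) with heq | hne
              · exfalso
                have hab : a ≠ b := by
                  intro hh
                  rw [hh, e.refl] at heq
                  linarith
                rcases he x y a b hxy hab heq with ⟨h', _⟩ | ⟨h', _⟩
                · exact hxa h'
                · exact hxb h'
              · exact abs_pos.mpr (sub_ne_zero.mpr hne)
            calc (0:ℝ) < |e.toFun x y - e.toFun a b| := habs
              _ ≤ max (1/(m+1:ℝ) - e.toFun x b) |e.toFun x y - e.toFun a b| := le_max_right _ _
              _ ≤ _ := le_max_right _ _
          · push_neg at h3
            calc (0:ℝ) < 1/(m+1:ℝ) - e.toFun x b := by linarith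
              _ ≤ max (1/(m+1:ℝ) - e.toFun x b) |e.toFun x y - e.toFun a b| := le_max_left _ _
              _ ≤ _ := le_max_right _ _
        · push_neg at h2
          calc (0:ℝ) < 1/(m+1:ℝ) - e.toFun x a := by linarith
            _ ≤ max (1/(m+1:ℝ) - e.toFun x y) (1/(m+1:ℝ) - e.toFun x a) := le_max_right _ _
            _ ≤ _ := le_max_left _ _
      · push_neg at h1
        calc (0:ℝ) < 1/(m+1:ℝ) - e.toFun x y := by linarith
          _ ≤ max (1/(m+1:ℝ) - e.toFun x y) (1/(m+1:ℝ) - e.toFun x a) := le_max_left _ _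
          _ ≤ _ := le_max_left _ _
    have hT : IsCompact (K ×ˢ K ×ˢ K ×ˢ K) :=
      (isCompact_compactCovering X n).prod ((isCompact_compactCovering X n).prod
        ((isCompact_compactCovering X n).prod (isCompact_compactCovering X n)))
    obtain ⟨k, hk⟩ := hKne
    have hTne : (K ×ˢ K ×ˢ K ×ˢ K).Nonempty := ⟨(k, k, k, k), by
      simp only [Set.mem_prod]
      exact ⟨hk, hk, hk, hk⟩⟩
    have hc1 : Continuous fun w : X × X × X × X => e.toFun w.1 w.2.1 :=
      (mo_continuous₂ e).comp (continuous_fst.prodMk (continuous_fst.comp continuous_snd))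
    have hc2 : Continuous fun w : X × X × X × X => e.toFun w.1 w.2.2.1 :=
      (mo_continuous₂ e).comp (continuous_fst.prodMk
        (continuous_fst.comp (continuous_snd.comp continuous_snd)))
    have hc3 : Continuous fun w : X × X × X × X => e.toFun w.1 w.2.2.2 :=
      (mo_continuous₂ e).comp (continuous_fst.prodMk
        (continuous_snd.comp (continuous_snd.comp continuous_snd)))
    have hc4 : Continuous fun w : X × X × X × X => e.toFun w.2.2.1 w.2.2.2 :=
      (mo_continuous₂ e).comp ((continuous_fst.comp (continuous_snd.comp continuous_snd)).prodMk
        (continuous_snd.comp (continuous_snd.comp continuous_snd)))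
    have hgc : Continuous g := by
      rw [hg]
      exact ((continuous_const.sub hc1).max (continuous_const.sub hc2)).max
        ((continuous_const.sub hc3).max ((hc1.sub hc4).abs))
    obtain ⟨w₀, hw₀T, hmin⟩ := hT.exists_isMinOn hTne hgc.continuousOn
    set γ := g w₀ / 2 with hγdef
    have hγ : 0 < γ := by
      have := hgpos w₀
      rw [hγdef]
      linarith
    refine ⟨γ, hγ, ?_⟩
    intro x hx y hy a ha b hb h1 h2 h3
    have hmem : (x, y, a, b) ∈ K ×ˢ K ×ˢ K ×ˢ K := by
      simp only [Set.mem_prod]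
      exact ⟨hx, hy, ha, hb⟩
    have hge : 2 * γ ≤ g (x, y, a, b) := by
      have := hmin hmem
      rw [hγdef]
      simp only [Set.mem_setOf_eq] at this
      linarith [this]
    rw [hg] at hge
    simp only [] at hge
    rcases le_max_iff.mp hge with h' | h'
    · rcases le_max_iff.mp h' with h'' | h'' <;> linarith
    · rcases le_max_iff.mp h' with h'' | h'' <;> linarith
  · refine ⟨1, one_pos, ?_⟩
    intro x hx
    exact absurd ⟨x, hx⟩ hKne

lemma mem_Uset_SRel [SigmaCompactSpace X] {e : MetricOn X}
    (h : ∀ n m : ℕ, e ∈ Uset X n m) : SRel e := by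
  have hcore : ∀ x y a b : X, x ≠ y → e.toFun x y = e.toFun a b → x ≠ a → x ≠ b → False := by
    intro x y a b hxy heq hxa hxb
    have hmem : ∀ z : X, ∃ k, z ∈ compactCovering X k := by
      intro z
      have : z ∈ ⋃ k, compactCovering X k := by rw [iUnion_compactCovering]; trivial
      exact Set.mem_iUnion.mp this
    obtain ⟨k1, hk1⟩ := hmem x
    obtain ⟨k2, hk2⟩ := hmem y
    obtain ⟨k3, hk3⟩ := hmem a
    obtain ⟨k4, hk4⟩ := hmem b
    set n := max (max k1 k2) (max k3 k4) with hn
    have hx : x ∈ compactCovering X n :=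
      compactCovering_subset X (le_trans (le_max_left k1 k2) (le_max_left _ _)) hk1
    have hy : y ∈ compactCovering X n :=
      compactCovering_subset X (le_trans (le_max_right k1 k2) (le_max_left _ _)) hk2
    have ha : a ∈ compactCovering X n :=
      compactCovering_subset X (le_trans (le_max_left k3 k4) (le_max_right _ _)) hk3
    have hb : b ∈ compactCovering X n :=
      compactCovering_subset X (le_trans (le_max_right k3 k4) (le_max_right _ _)) hk4
    have hpxy : 0 < e.toFun x y := mo_pos e hxy
    have hpxa : 0 < e.toFun x a := mo_pos e hxa
    have hpxb : 0 < e.toFun x b := mo_pos e hxb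
    set ε := min (min (e.toFun x y) (e.toFun x a)) (e.toFun x b) with hε
    have hεpos : 0 < ε := lt_min (lt_min hpxy hpxa) hpxb
    obtain ⟨m, hm⟩ := exists_nat_one_div_lt hεpos
    obtain ⟨γ, hγ, hP⟩ := h n m
    have hεxy : ε ≤ e.toFun x y := le_trans (min_le_left _ _) (min_le_left _ _)
    have hεxa : ε ≤ e.toFun x a := le_trans (min_le_left _ _) (min_le_right _ _)
    have hεxb : ε ≤ e.toFun x b := min_le_right _ _
    have hgap := hP x hx y hy a ha b hb (by linarith) (by linarith) (by linarith)
    rw [heq] at hgap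
    simp at hgap
    linarith
  intro x y a b hxy hab heq
  by_contra hcon
  push_neg at hcon
  obtain ⟨hc1, hc2⟩ := hcon
  by_cases hxa : x = a
  · subst hxa
    have hyb : y ≠ b := hc1 rfl
    have hya : y ≠ x := Ne.symm hxy
    exact hcore y x x b hya (by rw [e.symm]; exact heq) hya hyb
  · by_cases hxb : x = b
    · subst hxb
      have hya : y ≠ a := hc2 rfl
      exact hcore y x a x (Ne.symm hxy) (by rw [e.symm]; exact heq) hya (Ne.symm hxy)
    · exact hcore x y a b hxy heq hxa hxb

lemma SRel_rigid (h3 : 3 ≤ Cardinal.mk X) {e : MetricOn X} (he : SRel e) : RigidM e := by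
  intro f hbij hiso
  funext x
  simp only [id]
  by_contra hfx
  have hy : ∀ y, y ≠ x → f x = y := by
    intro y hyx
    have h1 : e.toFun (f x) (f y) = e.toFun x y := hiso x y
    have hxy : x ≠ y := fun h => hyx h.symm
    have hpos : 0 < e.toFun x y := mo_pos e hxy
    have hne : f x ≠ f y := by
      intro hh
      rw [hh, e.refl] at h1
      linarith
    rcases he (f x) (f y) x y hne hxy h1 with ⟨h', _⟩ | ⟨h', _⟩
    · exact absurd h' hfx
    · exact h'
  obtain ⟨z1, hz1x, -⟩ := Cardinal.three_le h3 x x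
  obtain ⟨z2, hz2z1, hz2x⟩ := Cardinal.three_le h3 z1 x
  exact hz2z1 (by rw [← hy z1 hz1x, ← hy z2 hz2x])

end Stmt14Aux

/-- For a strongly zero-dimensional, `σ`-compact metrizable space `X`
with `3 ≤ card X ≤ 𝔠`, the set `R(X)` of rigid metrics is comeager in `(Met(X), D_X)`,
i.e. it contains a dense `Gδ` subset. -/
theorem stmt14 {X : Type} [TopologicalSpace X] [TopologicalSpace.MetrizableSpace X]
    [SigmaCompactSpace X] (hX : StronglyZeroDim X)
    (h3 : 3 ≤ Cardinal.mk X) (hcard : Cardinal.mk X ≤ Cardinal.continuum) :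
    ∃ G : Set (MetricOn X),
      IsGδ G ∧ Dense G ∧ G ⊆ {e : MetricOn X | RigidM e} := by
  classical
  haveI hne : Nonempty X := by
    rw [← Cardinal.mk_ne_zero_iff (α := X)]
    intro h0
    rw [h0] at h3
    exact absurd h3 (by norm_num)
  refine ⟨⋂ nm : ℕ × ℕ, Stmt14Aux.Uset X nm.1 nm.2, ?_, ?_, ?_⟩
  · exact IsGδ.iInter fun nm => (Stmt14Aux.isOpen_Uset nm.1 nm.2).isGδ
  · rw [dense_iff_inter_open]
    rintro U hU ⟨d₀, hd₀⟩
    obtain ⟨ε, hε, hb⟩ := Stmt14Aux.exists_ball_subset hU hd₀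
    obtain ⟨e, heSR, hlt⟩ := Stmt14Aux.exists_SR_close hX d₀ hε
    exact ⟨e, hb hlt, Set.mem_iInter.mpr fun nm => Stmt14Aux.SRel_mem_Uset heSR nm.1 nm.2⟩
  · intro e he
    exact Stmt14Aux.SRel_rigid h3
      (Stmt14Aux.mem_Uset_SRel fun n m => Set.mem_iInter.mp he (n, m))
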